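/- Let K and L be finite nonempty simplicial complexes on disjoint vertex sets. The join K * L is strongly collapsible if and only if K is strongly collapsible or L is strongly collapsible. -/

import Mathlib

open Finset

/-- A finite abstract simplicial complex on vertex type `V`. -/
structure SC (V : Type*) [DecidableEq V] where
  faces : Finset (Finset V)
  nonempty_of_mem : ∀ σ ∈ faces, σ.Nonempty
  down_closed : ∀ σ ∈ faces, ∀ τ ⊆ σ, τ.Nonempty → τ ∈ faces

variable {V : Type*} [DecidableEq V] {W : Type*} [DecidableEq W]

def SC.IsVertex (K : SC V) (v : V) : Prop := ({v} : Finset V) ∈ K.faces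

def SC.IsMaximal (K : SC V) (σ : Finset V) : Prop :=
  σ ∈ K.faces ∧ ∀ τ ∈ K.faces, σ ⊆ τ → σ = τ

/-- `K.Dominated v w` : the vertex `v` is dominated by the vertex `w ≠ v`,
i.e. every maximal simplex containing `v` also contains `w`. -/
def SC.Dominated (K : SC V) (v w : V) : Prop :=
  v ≠ w ∧ K.IsVertex v ∧ K.IsVertex w ∧ ∀ σ, K.IsMaximal σ → v ∈ σ → w ∈ σ

/-- Deletion of a vertex: the subcomplex of simplices not containing `v`. -/
def SC.delete (K : SC V) (v : V) : SC V where
  faces := K.faces.filter (fun σ => v ∉ σ)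
  nonempty_of_mem σ hσ := K.nonempty_of_mem σ (mem_filter.mp hσ).1
  down_closed σ hσ τ hτ hne := by
    rw [mem_filter] at hσ ⊢
    exact ⟨K.down_closed σ hσ.1 τ hτ hne, fun hv => hσ.2 (hτ hv)⟩

/-- An elementary strong collapse: deletion of a dominated vertex. -/
def CollapseStep (K L : SC V) : Prop := ∃ v w, K.Dominated v w ∧ L = K.delete v

/-- `Collapses K L` : `K` strongly collapses to `L`. -/
def Collapses (K L : SC V) : Prop := Relation.ReflTransGen CollapseStep K L

def SC.Minimal (K : SC V) : Prop := ∀ v w, ¬ K.Dominated v w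

def StronglyCollapsible (K : SC V) : Prop :=
  ∃ (L : SC V) (v : V), Collapses K L ∧ L.faces = {({v} : Finset V)}

def IsCore (K M : SC V) : Prop := Collapses K M ∧ M.Minimal

/-- Union of two complexes on the same vertex type. -/
def SC.union (K L : SC V) : SC V where
  faces := K.faces ∪ L.faces
  nonempty_of_mem σ h := (mem_union.mp h).elim (K.nonempty_of_mem σ) (L.nonempty_of_mem σ)
  down_closed σ h τ hτ hne := mem_union.mpr <| (mem_union.mp h).elim
    (fun h => Or.inl (K.down_closed σ h τ hτ hne))
    (fun h => Or.inr (L.down_closed σ h τ hτ hne))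

/-- Isomorphism of simplicial complexes on the same vertex type. -/
def Isom (K L : SC V) : Prop :=
  ∃ e : V ≃ V, ∀ σ : Finset V, σ ∈ K.faces ↔ σ.image e ∈ L.faces

def SC.star (K : SC V) (a : V) : Finset (Finset V) := K.faces.filter (fun σ => a ∈ σ)

def SC.link (K : SC V) (v : V) : Finset (Finset V) :=
  K.faces.filter (fun τ => v ∉ τ ∧ insert v τ ∈ K.faces)



section Aux
open Sum

lemma SC.ext' {K L : SC V} (h : K.faces = L.faces) : K = L := by
  cases K; cases L; simpa using h

lemma SC.exists_maximal (K : SC V) {σ : Finset V} (hσ : σ ∈ K.faces) :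
    ∃ τ, K.IsMaximal τ ∧ σ ⊆ τ := by
  classical
  obtain ⟨τ, hτ, hmax⟩ := (K.faces.filter (fun τ => σ ⊆ τ)).exists_maximal
    ⟨σ, by simp [hσ]⟩
  simp only [Finset.mem_filter] at hτ
  refine ⟨τ, ⟨hτ.1, fun ρ hρ hsub => ?_⟩, hτ.2⟩
  by_contra hne
  exact hne (le_antisymm hsub (hmax (Finset.mem_filter.mpr ⟨hρ, hτ.2.trans hsub⟩) hsub))

lemma SC.delete_card_lt (K : SC V) {v : V} (hv : K.IsVertex v) :
    (K.delete v).faces.card < K.faces.card := by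
  apply Finset.card_lt_card
  refine ⟨Finset.filter_subset _ _, fun h => ?_⟩
  have := h hv
  simp [SC.delete] at this

lemma SC.mem_delete {K : SC V} {v : V} {σ : Finset V} :
    σ ∈ (K.delete v).faces ↔ σ ∈ K.faces ∧ v ∉ σ := Finset.mem_filter

lemma SC.delete_comm (K : SC V) (u v : V) : (K.delete u).delete v = (K.delete v).delete u := by
  apply SC.ext'
  ext σ
  simp [SC.mem_delete]; tauto

/-- If `v` is "dominated" by `w` in `K` (in the weak sense of the last condition),
with `w ≠ u`, then `v` is dominated by `w` in `K.delete u`. -/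
lemma SC.dominated_delete_of {K : SC V} {u v w : V} (hvu : v ≠ u) (hwu : w ≠ u) (hvw : v ≠ w)
    (hv : K.IsVertex v) (hw : K.IsVertex w)
    (hdom : ∀ τ, K.IsMaximal τ → v ∈ τ → w ∈ τ) : (K.delete u).Dominated v w := by
  refine ⟨hvw, SC.mem_delete.mpr ⟨hv, Finset.notMem_singleton.mpr (Ne.symm hvu)⟩,
    SC.mem_delete.mpr ⟨hw, Finset.notMem_singleton.mpr (Ne.symm hwu)⟩,
    fun σ hσ hvσ => ?_⟩
  obtain ⟨hσf, hσu⟩ := SC.mem_delete.mp hσ.1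
  obtain ⟨τ, hτmax, hστ⟩ := K.exists_maximal hσf
  have hwτ : w ∈ τ := hdom τ hτmax (hστ hvσ)
  have hins : insert w σ ∈ (K.delete u).faces := by
    refine SC.mem_delete.mpr ⟨K.down_closed τ hτmax.1 _ ?_ ⟨w, Finset.mem_insert_self _ _⟩, ?_⟩
    · exact Finset.insert_subset hwτ hστ
    · simp only [Finset.mem_insert, not_or]
      exact ⟨Ne.symm hwu, hσu⟩
  have := hσ.2 _ hins (Finset.subset_insert _ _)
  rw [this]; exact Finset.mem_insert_self _ _

end Aux

section Join
open Sum

@[simp] lemma toLeft_image_inl (s : Finset V) :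
    ((s.image Sum.inl : Finset (V ⊕ W))).toLeft = s := by ext x; simp
@[simp] lemma toRight_image_inl (s : Finset V) :
    ((s.image Sum.inl : Finset (V ⊕ W))).toRight = (∅ : Finset W) := by ext x; simp
@[simp] lemma toLeft_image_inr (s : Finset W) :
    ((s.image Sum.inr : Finset (V ⊕ W))).toLeft = (∅ : Finset V) := by ext x; simp
@[simp] lemma toRight_image_inr (s : Finset W) :
    ((s.image Sum.inr : Finset (V ⊕ W))).toRight = s := by ext x; simp

lemma eq_toLeft_union_toRight (σ : Finset (V ⊕ W)) :
    σ = σ.toLeft.image Sum.inl ∪ σ.toRight.image Sum.inr := by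
  ext x; cases x <;> simp

/-- The join of two complexes. -/
def joinSC (K : SC V) (L : SC W) : SC (V ⊕ W) where
  faces := ((K.faces.sup id).image Sum.inl ∪ (L.faces.sup id).image Sum.inr).powerset.filter
    (fun σ => σ.Nonempty ∧ (σ.toLeft.Nonempty → σ.toLeft ∈ K.faces) ∧
      (σ.toRight.Nonempty → σ.toRight ∈ L.faces))
  nonempty_of_mem σ hσ := (Finset.mem_filter.mp hσ).2.1
  down_closed σ hσ τ hτ hne := by
    rw [Finset.mem_filter, Finset.mem_powerset] at hσ ⊢
    obtain ⟨hsub, _, hl, hr⟩ := hσ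
    refine ⟨hτ.trans hsub, hne, fun h => ?_, fun h => ?_⟩
    · exact K.down_closed _ (hl (h.mono (Finset.toLeft_subset_toLeft hτ)))
        _ (Finset.toLeft_subset_toLeft hτ) h
    · exact L.down_closed _ (hr (h.mono (Finset.toRight_subset_toRight hτ)))
        _ (Finset.toRight_subset_toRight hτ) h

lemma mem_joinSC {K : SC V} {L : SC W} {σ : Finset (V ⊕ W)} :
    σ ∈ (joinSC K L).faces ↔ σ.Nonempty ∧ (σ.toLeft.Nonempty → σ.toLeft ∈ K.faces) ∧
      (σ.toRight.Nonempty → σ.toRight ∈ L.faces) := by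
  rw [joinSC, Finset.mem_filter, Finset.mem_powerset, and_iff_right_iff_imp]
  rintro ⟨hne, hl, hr⟩ x hx
  match x, hx with
  | inl a, hx =>
    have ha : a ∈ σ.toLeft := Finset.mem_toLeft.mpr hx
    have := hl ⟨a, ha⟩
    exact Finset.mem_union_left _ (Finset.mem_image_of_mem _
      (Finset.mem_sup.mpr ⟨_, this, ha⟩))
  | inr b, hx =>
    have hb : b ∈ σ.toRight := Finset.mem_toRight.mpr hx
    have := hr ⟨b, hb⟩
    exact Finset.mem_union_right _ (Finset.mem_image_of_mem _
      (Finset.mem_sup.mpr ⟨_, this, hb⟩))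

lemma mem_joinSC' {K : SC V} {L : SC W} {σ : Finset (V ⊕ W)} :
    σ ∈ (joinSC K L).faces ↔
      ((∃ τ ∈ K.faces, σ = τ.image Sum.inl) ∨ (∃ ρ ∈ L.faces, σ = ρ.image Sum.inr) ∨
        ∃ τ ∈ K.faces, ∃ ρ ∈ L.faces, σ = τ.image Sum.inl ∪ ρ.image Sum.inr) := by
  rw [mem_joinSC]
  constructor
  · rintro ⟨hne, hl, hr⟩
    rcases Finset.eq_empty_or_nonempty σ.toLeft with h1 | h1
    · rcases Finset.eq_empty_or_nonempty σ.toRight with h2 | h2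
      · exfalso
        obtain ⟨x, hx⟩ := hne
        cases x with
        | inl a => exact Finset.notMem_empty a (h1 ▸ Finset.mem_toLeft.mpr hx)
        | inr b => exact Finset.notMem_empty b (h2 ▸ Finset.mem_toRight.mpr hx)
      · refine Or.inr (Or.inl ⟨σ.toRight, hr h2, ?_⟩)
        conv_lhs => rw [eq_toLeft_union_toRight σ]
        simp [h1]
    · rcases Finset.eq_empty_or_nonempty σ.toRight with h2 | h2
      · refine Or.inl ⟨σ.toLeft, hl h1, ?_⟩
        conv_lhs => rw [eq_toLeft_union_toRight σ]
        simp [h2]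
      · exact Or.inr (Or.inr ⟨σ.toLeft, hl h1, σ.toRight, hr h2,
          eq_toLeft_union_toRight σ⟩)
  · rintro (⟨τ, hτ, rfl⟩ | ⟨ρ, hρ, rfl⟩ | ⟨τ, hτ, ρ, hρ, rfl⟩)
    · exact ⟨(K.nonempty_of_mem τ hτ).image _, by simpa using fun _ => hτ, by simp⟩
    · exact ⟨(L.nonempty_of_mem ρ hρ).image _, by simp, by simpa using fun _ => hρ⟩
    · have h1 : (τ.image Sum.inl ∪ ρ.image Sum.inr : Finset (V ⊕ W)).toLeft = τ := by
        rw [Finset.toLeft_union]; simp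
      have h2 : (τ.image Sum.inl ∪ ρ.image Sum.inr : Finset (V ⊕ W)).toRight = ρ := by
        rw [Finset.toRight_union]; simp
      refine ⟨?_, ?_, ?_⟩
      · exact Finset.Nonempty.mono Finset.subset_union_left ((K.nonempty_of_mem τ hτ).image _)
      · rw [h1]; exact fun _ => hτ
      · rw [h2]; exact fun _ => hρ

end Join

section JoinCollapse
open Sum

lemma isVertex_joinSC_inl {K : SC V} {L : SC W} {v : V} :
    (joinSC K L).IsVertex (inl v) ↔ K.IsVertex v := by
  rw [SC.IsVertex, mem_joinSC]
  constructor
  · rintro ⟨-, hl, -⟩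
    simpa [SC.IsVertex, show ({inl v} : Finset (V ⊕ W)).toLeft = {v} by ext; simp] using hl (by simp [Finset.Nonempty])
  · intro h
    have h1 : ({inl v} : Finset (V ⊕ W)).toLeft = {v} := by ext; simp
    have h2 : ({inl v} : Finset (V ⊕ W)).toRight = (∅ : Finset W) := by ext; simp
    rw [h1, h2]
    exact ⟨Finset.singleton_nonempty _, fun _ => h, fun hc => absurd hc (by simp)⟩

lemma isVertex_joinSC_inr {K : SC V} {L : SC W} {w : W} :
    (joinSC K L).IsVertex (inr w) ↔ L.IsVertex w := by
  rw [SC.IsVertex, mem_joinSC]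
  constructor
  · rintro ⟨-, -, hr⟩
    simpa [SC.IsVertex, show ({inr w} : Finset (V ⊕ W)).toRight = {w} by ext; simp] using hr (by simp [Finset.Nonempty])
  · intro h
    have h1 : ({inr w} : Finset (V ⊕ W)).toLeft = (∅ : Finset V) := by ext; simp
    have h2 : ({inr w} : Finset (V ⊕ W)).toRight = {w} := by ext; simp
    rw [h1, h2]
    exact ⟨Finset.singleton_nonempty _, fun hc => absurd hc (by simp), fun _ => h⟩

lemma dominated_joinSC_inl {K : SC V} (L : SC W) {v w : V} (h : K.Dominated v w) :
    (joinSC K L).Dominated (inl v) (inl w) := by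
  obtain ⟨hne, hv, hw, hdom⟩ := h
  refine ⟨by simp [hne], isVertex_joinSC_inl.mpr hv, isVertex_joinSC_inl.mpr hw,
    fun σ hσ hvσ => ?_⟩
  obtain ⟨hne', hl, hr⟩ := mem_joinSC.mp hσ.1
  have hvl : v ∈ σ.toLeft := Finset.mem_toLeft.mpr hvσ
  obtain ⟨τ, hτmax, hsub⟩ := K.exists_maximal (hl ⟨v, hvl⟩)
  have hwτ : w ∈ τ := hdom τ hτmax (hsub hvl)
  have hins : insert (inl w) σ ∈ (joinSC K L).faces := by
    rw [mem_joinSC]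
    refine ⟨⟨_, Finset.mem_insert_self _ _⟩, fun _ => ?_, ?_⟩
    · rw [Finset.toLeft_insert_inl]
      exact K.down_closed τ hτmax.1 _ (Finset.insert_subset hwτ hsub)
        ⟨w, Finset.mem_insert_self _ _⟩
    · rw [Finset.toRight_insert_inl]; exact hr
  have := hσ.2 _ hins (Finset.subset_insert _ _)
  rw [this]; exact Finset.mem_insert_self _ _

lemma dominated_joinSC_inr (K : SC V) {L : SC W} {v w : W} (h : L.Dominated v w) :
    (joinSC K L).Dominated (inr v) (inr w) := by
  obtain ⟨hne, hv, hw, hdom⟩ := h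
  refine ⟨by simp [hne], isVertex_joinSC_inr.mpr hv, isVertex_joinSC_inr.mpr hw,
    fun σ hσ hvσ => ?_⟩
  obtain ⟨hne', hl, hr⟩ := mem_joinSC.mp hσ.1
  have hvl : v ∈ σ.toRight := Finset.mem_toRight.mpr hvσ
  obtain ⟨τ, hτmax, hsub⟩ := L.exists_maximal (hr ⟨v, hvl⟩)
  have hwτ : w ∈ τ := hdom τ hτmax (hsub hvl)
  have hins : insert (inr w) σ ∈ (joinSC K L).faces := by
    rw [mem_joinSC]
    refine ⟨⟨_, Finset.mem_insert_self _ _⟩, ?_, fun _ => ?_⟩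
    · rw [Finset.toLeft_insert_inr]; exact hl
    · rw [Finset.toRight_insert_inr]
      exact L.down_closed τ hτmax.1 _ (Finset.insert_subset hwτ hsub)
        ⟨w, Finset.mem_insert_self _ _⟩
  have := hσ.2 _ hins (Finset.subset_insert _ _)
  rw [this]; exact Finset.mem_insert_self _ _

lemma joinSC_delete_inl (K : SC V) (L : SC W) (v : V) :
    (joinSC K L).delete (inl v) = joinSC (K.delete v) L := by
  apply SC.ext'
  ext σ
  rw [SC.mem_delete, mem_joinSC, mem_joinSC]
  have hmem : inl v ∈ σ ↔ v ∈ σ.toLeft := Finset.mem_toLeft.symm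
  constructor
  · rintro ⟨⟨hne, hl, hr⟩, hv⟩
    exact ⟨hne, fun h => SC.mem_delete.mpr ⟨hl h, fun hc => hv (hmem.mpr hc)⟩, hr⟩
  · rintro ⟨hne, hl, hr⟩
    refine ⟨⟨hne, fun h => (SC.mem_delete.mp (hl h)).1, hr⟩, fun hc => ?_⟩
    have hvl := hmem.mp hc
    exact (SC.mem_delete.mp (hl ⟨v, hvl⟩)).2 hvl

lemma joinSC_delete_inr (K : SC V) (L : SC W) (w : W) :
    (joinSC K L).delete (inr w) = joinSC K (L.delete w) := by
  apply SC.ext'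
  ext σ
  rw [SC.mem_delete, mem_joinSC, mem_joinSC]
  have hmem : inr w ∈ σ ↔ w ∈ σ.toRight := Finset.mem_toRight.symm
  constructor
  · rintro ⟨⟨hne, hl, hr⟩, hv⟩
    exact ⟨hne, hl, fun h => SC.mem_delete.mpr ⟨hr h, fun hc => hv (hmem.mpr hc)⟩⟩
  · rintro ⟨hne, hl, hr⟩
    refine ⟨⟨hne, hl, fun h => (SC.mem_delete.mp (hr h)).1⟩, fun hc => ?_⟩
    have hvl := hmem.mp hc
    exact (SC.mem_delete.mp (hr ⟨w, hvl⟩)).2 hvl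

lemma collapses_joinSC_left {K K' : SC V} (L : SC W) (h : Collapses K K') :
    Collapses (joinSC K L) (joinSC K' L) := by
  refine Relation.ReflTransGen.lift (fun M => joinSC M L) (fun a b hab => ?_) _ _ h
  obtain ⟨v, w, hd, rfl⟩ := hab
  exact ⟨inl v, inl w, dominated_joinSC_inl L hd, (joinSC_delete_inl a L v).symm⟩

lemma collapses_joinSC_right (K : SC V) {L L' : SC W} (h : Collapses L L') :
    Collapses (joinSC K L) (joinSC K L') := by
  refine Relation.ReflTransGen.lift (fun M => joinSC K M) (fun a b hab => ?_) _ _ h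
  obtain ⟨v, w, hd, rfl⟩ := hab
  exact ⟨inr v, inr w, dominated_joinSC_inr K hd, (joinSC_delete_inr K a v).symm⟩

end JoinCollapse

section Cone
open Sum

lemma cone_collapses (v : V) : ∀ n (L : SC W) (K : SC V),
    K.faces = {({v} : Finset V)} → L.faces.card ≤ n →
    ∃ J', Collapses (joinSC K L) J' ∧ J'.faces = {({inl v} : Finset (V ⊕ W))} := by
  intro n
  induction n with
  | zero =>
    intro L K hK hcard
    have hL : L.faces = ∅ := Finset.card_eq_zero.mp (Nat.le_zero.mp hcard)
    refine ⟨joinSC K L, Relation.ReflTransGen.refl, ?_⟩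
    ext σ
    rw [mem_joinSC, hK, hL, Finset.mem_singleton]
    constructor
    · rintro ⟨hne, hl, hr⟩
      have h2 : σ.toRight = ∅ := by
        by_contra h
        exact Finset.notMem_empty _ (hr (Finset.nonempty_iff_ne_empty.mpr h))
      have h1 : σ.toLeft.Nonempty := by
        obtain ⟨x, hx⟩ := hne
        cases x with
        | inl a => exact ⟨a, Finset.mem_toLeft.mpr hx⟩
        | inr b => exact absurd (Finset.mem_toRight.mpr hx) (by simp [h2])
      have := hl h1
      rw [Finset.mem_singleton, eq_toLeft_union_toRight σ, this, h2]
      simp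
    · intro hσ
      rw [Finset.mem_singleton] at hσ
      subst hσ
      have h1 : ({inl v} : Finset (V ⊕ W)).toLeft = {v} := by ext; simp
      have h2 : ({inl v} : Finset (V ⊕ W)).toRight = (∅ : Finset W) := by ext; simp
      rw [h1, h2]
      exact ⟨Finset.singleton_nonempty _, fun _ => rfl, fun hc => absurd hc (by simp)⟩
  | succ n ih =>
    intro L K hK hcard
    rcases Finset.eq_empty_or_nonempty L.faces with hL | hL
    · exact ih L K hK (hL ▸ by simp)
    · obtain ⟨ρ, hρ⟩ := hL
      obtain ⟨u, hu⟩ := L.nonempty_of_mem ρ hρ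
      have huv : L.IsVertex u := L.down_closed ρ hρ {u} (Finset.singleton_subset_iff.mpr hu)
        (Finset.singleton_nonempty _)
      -- inr u is dominated by inl v
      have hdom : (joinSC K L).Dominated (inr u) (inl v) := by
        refine ⟨by simp, isVertex_joinSC_inr.mpr huv,
          isVertex_joinSC_inl.mpr (by rw [SC.IsVertex, hK]; exact Finset.mem_singleton_self _),
          fun σ hσ hu' => ?_⟩
        obtain ⟨hne, hl, hr⟩ := mem_joinSC.mp hσ.1
        have hins : insert (inl v) σ ∈ (joinSC K L).faces := by
          rw [mem_joinSC, Finset.toLeft_insert_inl, Finset.toRight_insert_inl]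
          refine ⟨⟨_, Finset.mem_insert_self _ _⟩, fun _ => ?_, hr⟩
          rw [hK, Finset.mem_singleton]
          rcases Finset.eq_empty_or_nonempty σ.toLeft with h | h
          · rw [h]; simp
          · have := hl h; rw [hK, Finset.mem_singleton] at this
            rw [this]; simp
        have := hσ.2 _ hins (Finset.subset_insert _ _)
        rw [this]; exact Finset.mem_insert_self _ _
      have hstep : CollapseStep (joinSC K L) (joinSC K (L.delete u)) :=
        ⟨inr u, inl v, hdom, (joinSC_delete_inr K L u).symm⟩
      have hcard' : (L.delete u).faces.card ≤ n :=
        Nat.lt_succ_iff.mp (lt_of_lt_of_le (L.delete_card_lt huv) hcard)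
      obtain ⟨J', hJ', hpt⟩ := ih (L.delete u) K hK hcard'
      exact ⟨J', Relation.ReflTransGen.head hstep hJ', hpt⟩

lemma strCollapsible_joinSC_left {K : SC V} (L : SC W) (h : StronglyCollapsible K) :
    StronglyCollapsible (joinSC K L) := by
  obtain ⟨P, v, hcol, hpt⟩ := h
  obtain ⟨J', hJ', hpt'⟩ := cone_collapses v L.faces.card L P hpt le_rfl
  exact ⟨J', inl v, (collapses_joinSC_left L hcol).trans hJ', hpt'⟩

end Cone

section Map

variable {V' : Type*} [DecidableEq V']

def SC.map (e : V ≃ V') (K : SC V) : SC V' where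
  faces := K.faces.image (Finset.image e)
  nonempty_of_mem σ hσ := by
    obtain ⟨τ, hτ, rfl⟩ := Finset.mem_image.mp hσ
    exact (K.nonempty_of_mem τ hτ).image _
  down_closed σ hσ τ hτ hne := by
    obtain ⟨ρ, hρ, rfl⟩ := Finset.mem_image.mp hσ
    refine Finset.mem_image.mpr ⟨τ.image e.symm, K.down_closed ρ hρ _ ?_ (hne.image _), ?_⟩
    · intro x hx
      obtain ⟨y, hy, rfl⟩ := Finset.mem_image.mp hx
      have := hτ hy
      obtain ⟨z, hz, hez⟩ := Finset.mem_image.mp this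
      rwa [← hez, Equiv.symm_apply_apply]
    · rw [Finset.image_image]
      simp
  
lemma SC.mem_map {e : V ≃ V'} {K : SC V} {σ : Finset V'} :
    σ ∈ (K.map e).faces ↔ σ.image e.symm ∈ K.faces := by
  constructor
  · intro h
    obtain ⟨τ, hτ, rfl⟩ := Finset.mem_image.mp h
    rwa [Finset.image_image, show (⇑e.symm ∘ ⇑e) = id by ext; simp, Finset.image_id]
  · intro h
    refine Finset.mem_image.mpr ⟨σ.image e.symm, h, ?_⟩
    rw [Finset.image_image, show (⇑e ∘ ⇑e.symm) = id by ext; simp, Finset.image_id]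

lemma mem_image_equiv_symm {V' : Type*} [DecidableEq V'] {e : V ≃ V'} {σ : Finset V'} {v : V} :
    v ∈ σ.image e.symm ↔ e v ∈ σ := by
  rw [Finset.mem_image]
  constructor
  · rintro ⟨a, ha, rfl⟩; simpa using ha
  · intro h; exact ⟨e v, h, by simp⟩

lemma SC.map_isMaximal {e : V ≃ V'} {K : SC V} {σ : Finset V'} :
    (K.map e).IsMaximal σ ↔ K.IsMaximal (σ.image e.symm) := by
  constructor
  · rintro ⟨h1, h2⟩
    refine ⟨SC.mem_map.mp h1, fun τ hτ hsub => ?_⟩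
    have hτ' : τ.image e ∈ (K.map e).faces := Finset.mem_image.mpr ⟨τ, hτ, rfl⟩
    have hsub' : σ ⊆ τ.image e := by
      intro x hx
      have : e.symm x ∈ τ := hsub (Finset.mem_image_of_mem _ hx)
      simpa using Finset.mem_image_of_mem e this
    have := h2 _ hτ' hsub'
    rw [this, Finset.image_image]
    simp
  · rintro ⟨h1, h2⟩
    refine ⟨SC.mem_map.mpr h1, fun τ hτ hsub => ?_⟩
    have := h2 _ (SC.mem_map.mp hτ) (Finset.image_subset_image hsub)
    have hσ : (σ.image ⇑e.symm).image ⇑e = (τ.image ⇑e.symm).image ⇑e := by rw [this]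
    rwa [Finset.image_image, Finset.image_image, show (⇑e ∘ ⇑e.symm) = id by ext; simp,
      Finset.image_id, Finset.image_id] at hσ

lemma SC.map_isVertex {e : V ≃ V'} {K : SC V} {v : V} :
    (K.map e).IsVertex (e v) ↔ K.IsVertex v := by
  rw [SC.IsVertex, SC.mem_map]
  simp [SC.IsVertex]

lemma SC.map_dominated {e : V ≃ V'} {K : SC V} {v w : V} (h : K.Dominated v w) :
    (K.map e).Dominated (e v) (e w) := by
  obtain ⟨hne, hv, hw, hdom⟩ := h
  refine ⟨by simp [hne], SC.map_isVertex.mpr hv, SC.map_isVertex.mpr hw, fun σ hσ hvσ => ?_⟩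
  have := hdom _ (SC.map_isMaximal.mp hσ) (mem_image_equiv_symm.mpr hvσ)
  exact mem_image_equiv_symm.mp this

lemma SC.map_delete (e : V ≃ V') (K : SC V) (v : V) :
    (K.delete v).map e = (K.map e).delete (e v) := by
  apply SC.ext'
  ext σ
  rw [SC.mem_delete, SC.mem_map, SC.mem_map, SC.mem_delete]
  have : e v ∈ σ ↔ v ∈ σ.image e.symm := mem_image_equiv_symm.symm
  tauto

lemma SC.map_collapses {e : V ≃ V'} {K K' : SC V} (h : Collapses K K') :
    Collapses (K.map e) (K'.map e) := by
  refine Relation.ReflTransGen.lift (SC.map e) (fun a b hab => ?_) _ _ h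
  obtain ⟨v, w, hd, rfl⟩ := hab
  exact ⟨e v, e w, SC.map_dominated hd, SC.map_delete e a v⟩

lemma SC.map_strCollapsible {e : V ≃ V'} {K : SC V} (h : StronglyCollapsible K) :
    StronglyCollapsible (K.map e) := by
  obtain ⟨P, v, hcol, hpt⟩ := h
  refine ⟨P.map e, e v, SC.map_collapses hcol, ?_⟩
  have : (P.map e).faces = P.faces.image (Finset.image e) := rfl
  rw [this, hpt]
  simp

end Map

section Key

lemma strCollapsible_head {K M : SC V} (hs : CollapseStep K M) (h : StronglyCollapsible M) :
    StronglyCollapsible K := by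
  obtain ⟨P, p, hc, hp⟩ := h
  exact ⟨P, p, Relation.ReflTransGen.head hs hc, hp⟩

lemma swap_image_mem {K : SC V} {u v : V}
    (hmax : ∀ τ, K.IsMaximal τ → (u ∈ τ ↔ v ∈ τ)) :
    ∀ σ ∈ K.faces, σ.image (Equiv.swap u v) ∈ K.faces := by
  intro σ hσ
  obtain ⟨τ, hτmax, hστ⟩ := K.exists_maximal hσ
  refine K.down_closed τ hτmax.1 _ ?_ ((K.nonempty_of_mem σ hσ).image _)
  intro x hx
  obtain ⟨y, hy, rfl⟩ := Finset.mem_image.mp hx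
  rcases eq_or_ne y u with rfl | hyu
  · rw [Equiv.swap_apply_left]; exact (hmax τ hτmax).mp (hστ hy)
  rcases eq_or_ne y v with rfl | hyv
  · rw [Equiv.swap_apply_right]; exact (hmax τ hτmax).mpr (hστ hy)
  · rw [Equiv.swap_apply_of_ne_of_ne hyu hyv]; exact hστ hy

lemma map_swap_eq {K : SC V} {u v : V}
    (hmax : ∀ τ, K.IsMaximal τ → (u ∈ τ ↔ v ∈ τ)) :
    K.map (Equiv.swap u v) = K := by
  apply SC.ext'
  ext σ
  rw [SC.mem_map, Equiv.symm_swap]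
  have hinv : ∀ ρ : Finset V, (ρ.image (Equiv.swap u v)).image (Equiv.swap u v) = ρ := by
    intro ρ
    rw [Finset.image_image, show (⇑(Equiv.swap u v) ∘ ⇑(Equiv.swap u v)) = id by
      ext x; simp [Equiv.swap_apply_self], Finset.image_id]
  constructor
  · intro h
    have := swap_image_mem hmax _ h
    rwa [hinv] at this
  · intro h; exact swap_image_mem hmax _ h

lemma strCollapsible_delete : ∀ n (K : SC V), K.faces.card ≤ n → StronglyCollapsible K →
    ∀ v w, K.Dominated v w → StronglyCollapsible (K.delete v) := by
  intro n
  induction n with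
  | zero =>
    intro K hcard _ v w hd
    have : K.faces = ∅ := Finset.card_eq_zero.mp (Nat.le_zero.mp hcard)
    exact absurd hd.2.1 (by simp [SC.IsVertex, this])
  | succ n ih =>
    intro K hcard hK v w hd
    obtain ⟨P, p, hcol, hpt⟩ := hK
    rcases Relation.ReflTransGen.cases_head hcol with heq | ⟨M, hstep, hcol'⟩
    · exfalso
      obtain ⟨hvw, hv, hw, -⟩ := hd
      have h1 : v = p := by
        rw [SC.IsVertex, heq, hpt, Finset.mem_singleton] at hv
        exact Finset.singleton_inj.mp hv
      have h2 : w = p := by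
        rw [SC.IsVertex, heq, hpt, Finset.mem_singleton] at hw
        exact Finset.singleton_inj.mp hw
      exact hvw (h1.trans h2.symm)
    · obtain ⟨u, u', hdu, rfl⟩ := hstep
      have hM : StronglyCollapsible (K.delete u) := ⟨P, p, hcol', hpt⟩
      have hMcard : (K.delete u).faces.card ≤ n :=
        Nat.lt_succ_iff.mp (lt_of_lt_of_le (K.delete_card_lt hdu.2.1) hcard)
      rcases eq_or_ne v u with rfl | hvu
      · exact hM
      obtain ⟨hvw, hv, hw, hdom⟩ := hd
      obtain ⟨huu', hu, hu', hdom'⟩ := hdu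
      rcases eq_or_ne w u with hwu | hwu
      · -- v is dominated by u (w = u)
        rw [hwu] at hdom hvw
        rcases eq_or_ne u' v with hu'v | hu'v
        · -- mutual domination: swap u and v
          rw [hu'v] at hdom' huu'
          have hmax : ∀ τ, K.IsMaximal τ → (u ∈ τ ↔ v ∈ τ) :=
            fun τ hτ => ⟨hdom' τ hτ, hdom τ hτ⟩
          have heq : (K.delete u).map (Equiv.swap u v) = K.delete v := by
            rw [SC.map_delete, map_swap_eq hmax, Equiv.swap_apply_left]
          rw [← heq]
          exact SC.map_strCollapsible hM
        · -- v is dominated by u' in K.delete u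
          have h1 : (K.delete u).Dominated v u' :=
            SC.dominated_delete_of hvu (Ne.symm huu') (Ne.symm hu'v) hv hu'
              (fun τ hτ hvτ => hdom' τ hτ (hdom τ hτ hvτ))
          have h2 := ih (K.delete u) hMcard hM v u' h1
          have h3 : (K.delete v).Dominated u u' :=
            SC.dominated_delete_of (Ne.symm hvu) hu'v huu' hu hu' hdom'
          refine strCollapsible_head ⟨u, u', h3, rfl⟩ ?_
          rw [← K.delete_comm u v]
          exact h2
      · -- w ≠ u
        have h1 : (K.delete u).Dominated v w :=
          SC.dominated_delete_of hvu hwu hvw hv hw hdom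
        have h2 := ih (K.delete u) hMcard hM v w h1
        have h3 : ∃ x, (K.delete v).Dominated u x := by
          rcases eq_or_ne u' v with hu'v | hu'v
          · rw [hu'v] at hdom'
            exact ⟨w, SC.dominated_delete_of (Ne.symm hvu) (Ne.symm hvw) (Ne.symm hwu) hu hw
              (fun τ hτ huτ => hdom τ hτ (hdom' τ hτ huτ))⟩
          · exact ⟨u', SC.dominated_delete_of (Ne.symm hvu) hu'v huu' hu hu' hdom'⟩
        obtain ⟨x, h3⟩ := h3
        refine strCollapsible_head ⟨u, x, h3, rfl⟩ ?_
        rw [← K.delete_comm u v]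
        exact h2

lemma strCollapsible_of_collapses {K K' : SC V} (h : StronglyCollapsible K)
    (hc : Collapses K K') : StronglyCollapsible K' := by
  induction hc with
  | refl => exact h
  | tail _ hstep ih =>
    obtain ⟨v, w, hd, rfl⟩ := hstep
    exact strCollapsible_delete _ _ le_rfl ih v w hd

end Key

section Core

lemma exists_core' : ∀ n (K : SC V), K.faces.card ≤ n → ∃ M, Collapses K M ∧ M.Minimal := by
  intro n
  induction n with
  | zero =>
    intro K hcard
    refine ⟨K, Relation.ReflTransGen.refl, fun v w hd => ?_⟩
    have : K.faces = ∅ := Finset.card_eq_zero.mp (Nat.le_zero.mp hcard)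
    exact absurd hd.2.1 (by simp [SC.IsVertex, this])
  | succ n ih =>
    intro K hcard
    by_cases h : K.Minimal
    · exact ⟨K, Relation.ReflTransGen.refl, h⟩
    · rw [SC.Minimal] at h
      push_neg at h
      obtain ⟨v, w, hd⟩ := h
      have hcard' : (K.delete v).faces.card ≤ n :=
        Nat.lt_succ_iff.mp (lt_of_lt_of_le (K.delete_card_lt hd.2.1) hcard)
      obtain ⟨M, hcol, hmin⟩ := ih (K.delete v) hcard'
      exact ⟨M, Relation.ReflTransGen.head ⟨v, w, hd, rfl⟩ hcol, hmin⟩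

lemma exists_core (K : SC V) : ∃ M, Collapses K M ∧ M.Minimal :=
  exists_core' K.faces.card K le_rfl

lemma collapses_nonempty {K M : SC V} (h : Collapses K M) (hK : K.faces.Nonempty) :
    M.faces.Nonempty := by
  induction h with
  | refl => exact hK
  | tail _ hstep ih =>
    obtain ⟨v, w, hd, rfl⟩ := hstep
    exact ⟨{w}, SC.mem_delete.mpr ⟨hd.2.2.1, Finset.notMem_singleton.mpr hd.1⟩⟩

lemma minimal_strCollapsible_point {M : SC V} (hmin : M.Minimal) (hc : StronglyCollapsible M) :
    ∃ p, M.faces = {({p} : Finset V)} := by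
  obtain ⟨P, p, hcol, hpt⟩ := hc
  rcases Relation.ReflTransGen.cases_head hcol with heq | ⟨N, hstep, -⟩
  · exact ⟨p, heq ▸ hpt⟩
  · obtain ⟨v, w, hd, -⟩ := hstep
    exact absurd hd (hmin v w)

/-- If every maximal face of a minimal, non-point complex contains `w`, contradiction. -/
lemma not_cone_of_minimal {N : SC W} (hmin : N.Minimal) (hne : N.faces.Nonempty)
    (hpt : ∀ p, N.faces ≠ {({p} : Finset W)}) (w : W) (hw : N.IsVertex w)
    (hall : ∀ τ, N.IsMaximal τ → w ∈ τ) : False := by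
  have : ∃ σ ∈ N.faces, ∃ u ∈ σ, u ≠ w := by
    by_contra h
    push_neg at h
    apply hpt w
    apply Finset.eq_singleton_iff_unique_mem.mpr
    refine ⟨hw, fun σ hσ => ?_⟩
    have hsub : σ ⊆ {w} := fun x hx => Finset.mem_singleton.mpr (h σ hσ x hx)
    obtain ⟨y, hy⟩ := N.nonempty_of_mem σ hσ
    have := hsub hy
    rw [Finset.mem_singleton] at this
    subst this
    exact Finset.eq_singleton_iff_unique_mem.mpr ⟨hy, fun z hz => Finset.mem_singleton.mp (hsub hz)⟩
  obtain ⟨σ, hσ, u, hu, huw⟩ := this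
  have huv : N.IsVertex u := N.down_closed σ hσ {u} (Finset.singleton_subset_iff.mpr hu)
    (Finset.singleton_nonempty _)
  exact hmin u w ⟨huw, huv, hw, fun τ hτ _ => hall τ hτ⟩

end Core

section JoinMinimal
open Sum

/-- Lift: given a maximal face of `M` and a face of `N`, find a maximal face of the join
whose left part is the given maximal face and containing the given face of `N`. -/
lemma joinSC_max_lift_left {M : SC V} {N : SC W} {ρ : Finset W} (hρ : ρ ∈ N.faces)
    {σ : Finset V} (hσ : M.IsMaximal σ) :
    ∃ S, (joinSC M N).IsMaximal S ∧ S.toLeft = σ ∧ ρ.image Sum.inr ⊆ S := by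
  have hmem : σ.image Sum.inl ∪ ρ.image Sum.inr ∈ (joinSC M N).faces :=
    mem_joinSC'.mpr (Or.inr (Or.inr ⟨σ, hσ.1, ρ, hρ, rfl⟩))
  obtain ⟨S, hSmax, hsub⟩ := (joinSC M N).exists_maximal hmem
  refine ⟨S, hSmax, ?_, fun x hx => hsub (Finset.mem_union_right _ hx)⟩
  have h1 : σ ⊆ S.toLeft := by
    intro x hx
    exact Finset.mem_toLeft.mpr (hsub (Finset.mem_union_left _ (Finset.mem_image_of_mem _ hx)))
  obtain ⟨-, hl, -⟩ := mem_joinSC.mp hSmax.1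
  have h2 : S.toLeft ∈ M.faces := hl ((M.nonempty_of_mem σ hσ.1).mono h1)
  exact (hσ.2 _ h2 h1).symm

lemma joinSC_max_lift_right {M : SC V} {N : SC W} {ρ : Finset V} (hρ : ρ ∈ M.faces)
    {τ : Finset W} (hτ : N.IsMaximal τ) :
    ∃ S, (joinSC M N).IsMaximal S ∧ S.toRight = τ ∧ ρ.image Sum.inl ⊆ S := by
  have hmem : ρ.image Sum.inl ∪ τ.image Sum.inr ∈ (joinSC M N).faces :=
    mem_joinSC'.mpr (Or.inr (Or.inr ⟨ρ, hρ, τ, hτ.1, rfl⟩))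
  obtain ⟨S, hSmax, hsub⟩ := (joinSC M N).exists_maximal hmem
  refine ⟨S, hSmax, ?_, fun x hx => hsub (Finset.mem_union_left _ hx)⟩
  have h1 : τ ⊆ S.toRight := by
    intro x hx
    exact Finset.mem_toRight.mpr (hsub (Finset.mem_union_right _ (Finset.mem_image_of_mem _ hx)))
  obtain ⟨-, -, hr⟩ := mem_joinSC.mp hSmax.1
  have h2 : S.toRight ∈ N.faces := hr ((N.nonempty_of_mem τ hτ.1).mono h1)
  exact (hτ.2 _ h2 h1).symm

lemma joinSC_minimal {M : SC V} {N : SC W} (hMmin : M.Minimal) (hNmin : N.Minimal)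
    (hMne : M.faces.Nonempty) (hNne : N.faces.Nonempty)
    (hMpt : ∀ p, M.faces ≠ {({p} : Finset V)}) (hNpt : ∀ p, N.faces ≠ {({p} : Finset W)}) :
    (joinSC M N).Minimal := by
  rintro a b ⟨hab, ha, hb, hdom⟩
  cases a with
  | inl v =>
    have hv : M.IsVertex v := isVertex_joinSC_inl.mp ha
    cases b with
    | inl w =>
      refine hMmin v w ⟨by simpa using hab, hv, isVertex_joinSC_inl.mp hb, fun σ hσ hvσ => ?_⟩
      obtain ⟨ρ, hρ⟩ := hNne
      obtain ⟨S, hSmax, hSl, -⟩ := joinSC_max_lift_left hρ hσ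
      have : inl w ∈ S := hdom S hSmax (Finset.mem_toLeft.mp (hSl ▸ hvσ))
      exact hSl ▸ Finset.mem_toLeft.mpr this
    | inr w =>
      refine not_cone_of_minimal hNmin hNne hNpt w (isVertex_joinSC_inr.mp hb) (fun τ hτ => ?_)
      obtain ⟨S, hSmax, hSr, hsub⟩ := joinSC_max_lift_right hv hτ
      have hvS : inl v ∈ S := hsub (by simp)
      have : inr w ∈ S := hdom S hSmax hvS
      exact hSr ▸ Finset.mem_toRight.mpr this
  | inr v =>
    have hv : N.IsVertex v := isVertex_joinSC_inr.mp ha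
    cases b with
    | inr w =>
      refine hNmin v w ⟨by simpa using hab, hv, isVertex_joinSC_inr.mp hb, fun σ hσ hvσ => ?_⟩
      obtain ⟨ρ, hρ⟩ := hMne
      obtain ⟨S, hSmax, hSr, -⟩ := joinSC_max_lift_right hρ hσ
      have : inr w ∈ S := hdom S hSmax (Finset.mem_toRight.mp (hSr ▸ hvσ))
      exact hSr ▸ Finset.mem_toRight.mpr this
    | inl w =>
      refine not_cone_of_minimal hMmin hMne hMpt w (isVertex_joinSC_inl.mp hb) (fun τ hτ => ?_)
      obtain ⟨S, hSmax, hSl, hsub⟩ := joinSC_max_lift_left hv hτ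
      have hvS : inr v ∈ S := hsub (by simp)
      have : inl w ∈ S := hdom S hSmax hvS
      exact hSl ▸ Finset.mem_toLeft.mpr this

end JoinMinimal

section ConeRight
open Sum

lemma cone_collapses_right (v : W) : ∀ n (K : SC V) (L : SC W),
    L.faces = {({v} : Finset W)} → K.faces.card ≤ n →
    ∃ J', Collapses (joinSC K L) J' ∧ J'.faces = {({inr v} : Finset (V ⊕ W))} := by
  intro n
  induction n with
  | zero =>
    intro K L hL hcard
    have hK : K.faces = ∅ := Finset.card_eq_zero.mp (Nat.le_zero.mp hcard)
    refine ⟨joinSC K L, Relation.ReflTransGen.refl, ?_⟩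
    ext σ
    rw [mem_joinSC, hK, hL, Finset.mem_singleton]
    constructor
    · rintro ⟨hne, hl, hr⟩
      have h1 : σ.toLeft = ∅ := by
        by_contra h
        exact Finset.notMem_empty _ (hl (Finset.nonempty_iff_ne_empty.mpr h))
      have h2 : σ.toRight.Nonempty := by
        obtain ⟨x, hx⟩ := hne
        cases x with
        | inr a => exact ⟨a, Finset.mem_toRight.mpr hx⟩
        | inl b => exact absurd (Finset.mem_toLeft.mpr hx) (by simp [h1])
      have := hr h2
      rw [Finset.mem_singleton, eq_toLeft_union_toRight σ, this, h1]
      simp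
    · intro hσ
      rw [Finset.mem_singleton] at hσ
      subst hσ
      have h1 : ({inr v} : Finset (V ⊕ W)).toLeft = (∅ : Finset V) := by ext; simp
      have h2 : ({inr v} : Finset (V ⊕ W)).toRight = {v} := by ext; simp
      rw [h1, h2]
      exact ⟨Finset.singleton_nonempty _, fun hc => absurd hc (by simp), fun _ => rfl⟩
  | succ n ih =>
    intro K L hL hcard
    rcases Finset.eq_empty_or_nonempty K.faces with hE | hKne
    · exact ih K L hL (hE ▸ by simp)
    · obtain ⟨ρ, hρ⟩ := hKne
      obtain ⟨u, hu⟩ := K.nonempty_of_mem ρ hρ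
      have huv : K.IsVertex u := K.down_closed ρ hρ {u} (Finset.singleton_subset_iff.mpr hu)
        (Finset.singleton_nonempty _)
      have hdom : (joinSC K L).Dominated (inl u) (inr v) := by
        refine ⟨by simp, isVertex_joinSC_inl.mpr huv,
          isVertex_joinSC_inr.mpr (by rw [SC.IsVertex, hL]; exact Finset.mem_singleton_self _),
          fun σ hσ hu' => ?_⟩
        obtain ⟨hne, hl, hr⟩ := mem_joinSC.mp hσ.1
        have hins : insert (inr v) σ ∈ (joinSC K L).faces := by
          rw [mem_joinSC, Finset.toLeft_insert_inr, Finset.toRight_insert_inr]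
          refine ⟨⟨_, Finset.mem_insert_self _ _⟩, hl, fun _ => ?_⟩
          rw [hL, Finset.mem_singleton]
          rcases Finset.eq_empty_or_nonempty σ.toRight with h | h
          · rw [h]; simp
          · have := hr h; rw [hL, Finset.mem_singleton] at this
            rw [this]; simp
        have := hσ.2 _ hins (Finset.subset_insert _ _)
        rw [this]; exact Finset.mem_insert_self _ _
      have hstep : CollapseStep (joinSC K L) (joinSC (K.delete u) L) :=
        ⟨inl u, inr v, hdom, (joinSC_delete_inl K L u).symm⟩
      have hcard' : (K.delete u).faces.card ≤ n :=
        Nat.lt_succ_iff.mp (lt_of_lt_of_le (K.delete_card_lt huv) hcard)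
      obtain ⟨J', hJ', hpt⟩ := ih (K.delete u) L hL hcard'
      exact ⟨J', Relation.ReflTransGen.head hstep hJ', hpt⟩

lemma strCollapsible_joinSC_right (K : SC V) {L : SC W} (h : StronglyCollapsible L) :
    StronglyCollapsible (joinSC K L) := by
  obtain ⟨P, v, hcol, hpt⟩ := h
  obtain ⟨J', hJ', hpt'⟩ := cone_collapses_right v K.faces.card K P hpt le_rfl
  exact ⟨J', inr v, (collapses_joinSC_right K hcol).trans hJ', hpt'⟩

end ConeRight

open Sum in
theorem stmt10 (K : SC V) (L : SC W) (hK : K.faces.Nonempty) (hL : L.faces.Nonempty)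
    (J : SC (V ⊕ W))
    (hJ : ∀ σ : Finset (V ⊕ W), σ ∈ J.faces ↔
      ((∃ τ ∈ K.faces, σ = τ.image Sum.inl) ∨ (∃ ρ ∈ L.faces, σ = ρ.image Sum.inr) ∨
        ∃ τ ∈ K.faces, ∃ ρ ∈ L.faces, σ = τ.image Sum.inl ∪ ρ.image Sum.inr)) :
    StronglyCollapsible J ↔ (StronglyCollapsible K ∨ StronglyCollapsible L) := by
  have hJeq : J = joinSC K L := by
    apply SC.ext'
    ext σ
    rw [hJ, mem_joinSC']
  subst hJeq
  constructor
  · intro hc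
    obtain ⟨M, hcolM, hMmin⟩ := exists_core K
    obtain ⟨N, hcolN, hNmin⟩ := exists_core L
    by_cases hM : ∃ p, M.faces = {({p} : Finset V)}
    · obtain ⟨p, hp⟩ := hM
      exact Or.inl ⟨M, p, hcolM, hp⟩
    by_cases hN : ∃ p, N.faces = {({p} : Finset W)}
    · obtain ⟨p, hp⟩ := hN
      exact Or.inr ⟨N, p, hcolN, hp⟩
    exfalso
    push_neg at hM hN
    have hMne := collapses_nonempty hcolM hK
    have hNne := collapses_nonempty hcolN hL
    have hcolJ : Collapses (joinSC K L) (joinSC M N) :=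
      (collapses_joinSC_left L hcolM).trans (collapses_joinSC_right M hcolN)
    have hscMN := strCollapsible_of_collapses hc hcolJ
    have hmin := joinSC_minimal hMmin hNmin hMne hNne hM hN
    obtain ⟨p, hp⟩ := minimal_strCollapsible_point hmin hscMN
    obtain ⟨σM, hσM⟩ := hMne
    obtain ⟨m, hm⟩ := M.nonempty_of_mem σM hσM
    obtain ⟨σN, hσN⟩ := hNne
    obtain ⟨q, hq⟩ := N.nonempty_of_mem σN hσN
    have hmv : ({m} : Finset V) ∈ M.faces := M.down_closed σM hσM {m}
      (Finset.singleton_subset_iff.mpr hm) (Finset.singleton_nonempty _)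
    have hqv : ({q} : Finset W) ∈ N.faces := N.down_closed σN hσN {q}
      (Finset.singleton_subset_iff.mpr hq) (Finset.singleton_nonempty _)
    have hface : ({inl m, inr q} : Finset (V ⊕ W)) ∈ (joinSC M N).faces :=
      mem_joinSC'.mpr (Or.inr (Or.inr ⟨{m}, hmv, {q}, hqv, by ext x; cases x <;> simp⟩))
    rw [hp, Finset.mem_singleton] at hface
    have hcard := congrArg Finset.card hface
    rw [Finset.card_singleton, Finset.card_pair (by simp)] at hcard
    exact absurd hcard (by norm_num)
  · rintro (h | h)
    · exact strCollapsible_joinSC_left L h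
    · exact strCollapsible_joinSC_right K h
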